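/- Let n ≥ 4. The Kleene star (L_n(a,b))^* of the language L_n(a,b) has state complexity exactly 2^{n-1}. -/

import Mathlib

/-- Left quotient of a language by a word. -/
def leftQuot {α : Type} (L : Set (List α)) (w : List α) : Set (List α) := {x | w ++ x ∈ L}

/-- The set of left quotients of `L`. -/
def quotients {α : Type} (L : Set (List α)) : Set (Set (List α)) :=
  Set.range (leftQuot L)

/-- The state complexity of `L`: the number of distinct left quotients of `L`. -/
noncomputable def stateComplexity {α : Type} (L : Set (List α)) : ℕ :=
  Nat.card (quotients L)

/-- The two-letter alphabet `{a,b}`. -/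
inductive AB : Type
  | a | b
  deriving DecidableEq

/-- The transitions of `D_n` on `a,b` (states `{0,…,n-1}` embedded in `ℕ`):
`a : (1,…,n-1)(0→1)`, `b : (1,2)(0→2)`. -/
def stepAB (n : ℕ) (q : ℕ) : AB → ℕ
  | AB.a => if q = n - 1 then 1 else q + 1
  | AB.b => if q = 0 then 2 else if q = 1 then 2 else if q = 2 then 1 else q

/-- The DFA `D_n` over `{a,b}`, initial state `0`, final state `n-1`. -/
def DnAB (n : ℕ) : DFA AB ℕ := ⟨stepAB n, 0, {n - 1}⟩

/-- The language `L_n(a,b)` accepted by `D_n` over `{a,b}`. -/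
def LnAB (n : ℕ) : Language AB := (DnAB n).accepts


namespace SC12

/-- run the DFA от state q -/
def run (n : ℕ) (q : ℕ) (w : List AB) : ℕ := w.foldl (stepAB n) q

lemma run_append (n q : ℕ) (u v : List AB) : run n q (u ++ v) = run n (run n q u) v :=
  List.foldl_append ..

lemma run_cons (n q : ℕ) (c : AB) (w : List AB) : run n q (c :: w) = run n (stepAB n q c) w := rfl

lemma mem_Ln (n : ℕ) (x : List AB) : x ∈ LnAB n ↔ run n 0 x = n - 1 := by
  simp [LnAB, DnAB, DFA.mem_accepts, DFA.eval, DFA.evalFrom, run]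

lemma mem_kstar_iff (n : ℕ) (x : List AB) :
    x ∈ KStar.kstar (LnAB n) ↔ x = [] ∨ ∃ v s, v ∈ LnAB n ∧ s ∈ KStar.kstar (LnAB n) ∧ v ++ s = x := by
  constructor
  · intro hx
    rw [← Language.one_add_self_mul_kstar_eq_kstar (LnAB n)] at hx
    rcases (Language.mem_add _ _ _).1 hx with h | h
    · exact Or.inl ((Language.mem_one _).1 h)
    · rcases (Language.mem_mul).1 h with ⟨v, hv, s, hs, hvs⟩
      exact Or.inr ⟨v, s, hv, hs, hvs⟩
  · rintro (rfl | ⟨v, s, hv, hs, rfl⟩)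
    · exact Language.nil_mem_kstar _
    · rw [← Language.one_add_self_mul_kstar_eq_kstar (LnAB n)]
      exact (Language.mem_add _ _ _).2 (Or.inr ((Language.mem_mul).2 ⟨v, hv, s, hs, rfl⟩))

lemma step_ne_zero {n : ℕ} (hn : 4 ≤ n) (q : ℕ) (c : AB) : stepAB n q c ≠ 0 := by
  cases c <;> simp only [stepAB] <;> split_ifs <;> omega

def stepSet (n : ℕ) (S : Finset ℕ) (c : AB) : Finset ℕ :=
  if n - 1 ∈ S.image (fun q => stepAB n q c) then insert 0 (S.image (fun q => stepAB n q c))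
  else S.image (fun q => stepAB n q c)

lemma mem_stepSet_iff (n : ℕ) (S : Finset ℕ) (c : AB) (q' : ℕ) :
    q' ∈ stepSet n S c ↔ (∃ q ∈ S, stepAB n q c = q') ∨ (q' = 0 ∧ ∃ q ∈ S, stepAB n q c = n - 1) := by
  unfold stepSet
  split_ifs with h
  · simp only [Finset.mem_insert, Finset.mem_image] at *
    constructor
    · rintro (rfl | h') 
      · exact Or.inr ⟨rfl, h⟩
      · exact Or.inl h'
    · rintro (h' | ⟨rfl, _⟩)
      · exact Or.inr h'
      · exact Or.inl rfl
  · simp only [Finset.mem_image] at *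
    constructor
    · exact Or.inl
    · rintro (h' | ⟨rfl, h'⟩)
      · exact h'
      · exact absurd h' h

def Sfun (n : ℕ) (w : List AB) : Finset ℕ := w.foldl (stepSet n) {0}

lemma Sfun_nil (n : ℕ) : Sfun n [] = {0} := rfl

lemma Sfun_concat (n : ℕ) (w : List AB) (c : AB) :
    Sfun n (w ++ [c]) = stepSet n (Sfun n w) c := List.foldl_append ..

def Cset (n : ℕ) (S : Finset ℕ) : Language AB :=
  {x | (x = [] ∧ 0 ∈ S) ∨ ∃ q ∈ S, ∃ v s, x = v ++ s ∧ run n q v = n - 1 ∧ s ∈ KStar.kstar (LnAB n)}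

lemma Cset_zero (n : ℕ) (hn : 4 ≤ n) : Cset n {0} = KStar.kstar (LnAB n) := by
  ext x
  rw [Cset]; change _ ∨ _ ↔ _; rw [mem_kstar_iff]
  constructor
  · rintro (⟨rfl, -⟩ | ⟨q, hq, v, s, rfl, hrun, hs⟩)
    · exact Or.inl rfl
    · refine Or.inr ⟨v, s, ?_, hs, rfl⟩
      rw [mem_Ln]
      simpa using (Finset.mem_singleton.1 hq ▸ hrun)
  · rintro (rfl | ⟨v, s, hv, hs, rfl⟩)
    · exact Or.inl ⟨rfl, Finset.mem_singleton_self 0⟩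
    · exact Or.inr ⟨0, Finset.mem_singleton_self 0, v, s, rfl, (mem_Ln n v).1 hv, hs⟩

lemma quot_step {n : ℕ} (hn : 4 ≤ n) (S : Finset ℕ) (hcl : n - 1 ∈ S → 0 ∈ S) (c : AB) :
    leftQuot (Cset n S) [c] = Cset n (stepSet n S c) := by
  have hn1 : n - 1 ≠ 0 := by omega
  ext x
  simp only [leftQuot, Set.mem_setOf_eq, List.singleton_append]
  constructor
  · intro hx
    rcases hx with ⟨h, -⟩ | ⟨q, hq, v, s, heq, hrun, hs⟩
    · exact absurd h (by simp)
    · cases v with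
      | nil =>
        simp only [List.nil_append] at heq
        simp only [run] at hrun
        subst hrun heq
        -- s = c :: x ∈ L*, q = n-1 ∈ S, so 0 ∈ S
        have h0 : (0 : ℕ) ∈ S := hcl hq
        rcases (mem_kstar_iff n _).1 hs with h | ⟨f, t, hf, ht, hft⟩
        · exact absurd h (by simp)
        · cases f with
          | nil =>
            rw [mem_Ln] at hf
            simp only [run, List.foldl_nil] at hf
            omega
          | cons c' f' =>
            simp only [List.cons_append, List.cons.injEq] at hft
            obtain ⟨hcc, hx'⟩ := hft
            rw [mem_Ln, run_cons, hcc] at hf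
            refine Or.inr ⟨stepAB n 0 c, ?_, f', t, hx'.symm, hf, ht⟩
            rw [mem_stepSet_iff]
            exact Or.inl ⟨0, h0, rfl⟩
      | cons c' v' =>
        simp only [List.cons_append, List.cons.injEq] at heq
        obtain ⟨hcc, hx'⟩ := heq
        rw [run_cons, ← hcc] at hrun
        refine Or.inr ⟨stepAB n q c, ?_, v', s, hx', hrun, hs⟩
        rw [mem_stepSet_iff]
        exact Or.inl ⟨q, hq, rfl⟩
  · intro hx
    rcases hx with ⟨rfl, h0⟩ | ⟨q', hq', v, s, heq, hrun, hs⟩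
    · -- x = [], 0 ∈ stepSet S c; 0 not in image, so ∃ q ∈ S, step q c = n-1
      rw [mem_stepSet_iff] at h0
      rcases h0 with ⟨q, hq, hstep⟩ | ⟨-, q, hq, hstep⟩
      · exact absurd hstep (step_ne_zero hn q c)
      · refine Or.inr ⟨q, hq, [c], [], rfl, ?_, Language.nil_mem_kstar _⟩
        simpa [run] using hstep
    · rw [mem_stepSet_iff] at hq'
      rcases hq' with ⟨q, hq, rfl⟩ | ⟨rfl, q, hq, hstep⟩
      · refine Or.inr ⟨q, hq, c :: v, s, by rw [heq]; rfl, ?_, hs⟩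
        rwa [run_cons]
      · -- q' = 0 : v ∈ L, so c::x = [c] ++ (v ++ s) with v ++ s ∈ L*
        refine Or.inr ⟨q, hq, [c], v ++ s, by rw [heq]; rfl, by simpa [run] using hstep, ?_⟩
        exact (mem_kstar_iff n _).2 (Or.inr ⟨v, s, (mem_Ln n v).2 hrun, hs, rfl⟩)

lemma leftQuot_append {α : Type} (L : Set (List α)) (u v : List α) :
    leftQuot L (u ++ v) = leftQuot (leftQuot L u) v := by
  ext x; simp [leftQuot, List.append_assoc]

lemma Sfun_inv {n : ℕ} (hn : 4 ≤ n) (w : List AB) : n - 1 ∈ Sfun n w → 0 ∈ Sfun n w := by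
  induction w using List.reverseRecOn with
  | nil => intro _; simp [Sfun_nil]
  | append_singleton w c _ =>
    rw [Sfun_concat, mem_stepSet_iff, mem_stepSet_iff]
    rintro (⟨q, hq, hstep⟩ | ⟨h, -⟩)
    · exact Or.inr ⟨rfl, q, hq, hstep⟩
    · omega

lemma quot_eq {n : ℕ} (hn : 4 ≤ n) (w : List AB) :
    leftQuot (KStar.kstar (LnAB n) : Language AB) w = Cset n (Sfun n w) := by
  induction w using List.reverseRecOn with
  | nil =>
    rw [Sfun_nil, Cset_zero n hn]
    ext x; simp [leftQuot]
  | append_singleton w c ih =>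
    rw [leftQuot_append (KStar.kstar (LnAB n) : Language AB), ih, quot_step hn _ (Sfun_inv hn w) c, Sfun_concat]

/-! ### ZMod transfer layer -/

section ZModLayer

variable {n : ℕ}

/-- embed `ZMod (n-1)` into states `1..n-1` -/
def iot (n : ℕ) (z : ZMod (n - 1)) : ℕ := if z = 0 then n - 1 else z.val

lemma nz (hn : 4 ≤ n) : NeZero (n - 1) := ⟨by omega⟩

lemma iot_pos (hn : 4 ≤ n) (z : ZMod (n - 1)) : 1 ≤ iot n z := by
  haveI := nz hn
  unfold iot
  split_ifs with h
  · omega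
  · have := (ZMod.val_eq_zero z).not.2 h
    omega

lemma iot_le (hn : 4 ≤ n) (z : ZMod (n - 1)) : iot n z ≤ n - 1 := by
  haveI := nz hn
  unfold iot
  split_ifs with h
  · exact le_rfl
  · exact le_of_lt (ZMod.val_lt z)

lemma iot_lt_of_ne (hn : 4 ≤ n) {z : ZMod (n - 1)} (h : z ≠ 0) : iot n z < n - 1 := by
  haveI := nz hn
  unfold iot
  rw [if_neg h]
  exact ZMod.val_lt z

lemma cast_val (hn : 4 ≤ n) (z : ZMod (n - 1)) : ((z.val : ℕ) : ZMod (n - 1)) = z := by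
  haveI := nz hn
  exact ZMod.natCast_rightInverse z

lemma iot_cast (hn : 4 ≤ n) (z : ZMod (n - 1)) : ((iot n z : ℕ) : ZMod (n - 1)) = z := by
  unfold iot
  split_ifs with h
  · rw [h, ZMod.natCast_self]
  · exact cast_val hn z

lemma iot_inj (hn : 4 ≤ n) {z w : ZMod (n - 1)} (h : iot n z = iot n w) : z = w := by
  have := congrArg (fun k => ((k : ℕ) : ZMod (n - 1))) h
  simpa [iot_cast hn] using this

lemma cast_inj_lt (hn : 4 ≤ n) {i j : ℕ} (hi : i < n - 1) (hj : j < n - 1)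
    (h : (i : ZMod (n - 1)) = (j : ZMod (n - 1))) : i = j := by
  haveI := nz hn
  have := congrArg ZMod.val h
  rwa [ZMod.val_cast_of_lt hi, ZMod.val_cast_of_lt hj] at this

lemma iot_of_val (hn : 4 ≤ n) {i : ℕ} (h1 : 1 ≤ i) (h2 : i < n - 1) :
    iot n ((i : ℕ) : ZMod (n - 1)) = i := by
  haveI := nz hn
  have hne : ((i : ℕ) : ZMod (n - 1)) ≠ 0 := by
    intro h
    have : i = 0 := cast_inj_lt hn h2 (show (0:ℕ) < n - 1 by omega) (by rw [Nat.cast_zero]; exact h)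
    omega
  rw [iot, if_neg hne, ZMod.val_cast_of_lt h2]

lemma iot_zero (n : ℕ) : iot n (0 : ZMod (n - 1)) = n - 1 := by simp [iot]

lemma iot_one (hn : 4 ≤ n) : iot n (1 : ZMod (n - 1)) = 1 := by
  have : ((1 : ℕ) : ZMod (n - 1)) = (1 : ZMod (n - 1)) := by push_cast; ring
  rw [← this, iot_of_val hn le_rfl (by omega)]

lemma iot_two (hn : 4 ≤ n) : iot n (2 : ZMod (n - 1)) = 2 := by
  have : ((2 : ℕ) : ZMod (n - 1)) = (2 : ZMod (n - 1)) := by push_cast; ring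
  rw [← this, iot_of_val hn (by omega) (by omega)]

lemma iot_eq_top_iff (hn : 4 ≤ n) (z : ZMod (n - 1)) : iot n z = n - 1 ↔ z = 0 := by
  constructor
  · intro h
    by_contra hne
    have := iot_lt_of_ne hn hne
    omega
  · intro h; rw [h, iot_zero]

lemma iot_add_one (hn : 4 ≤ n) (z : ZMod (n - 1)) :
    iot n (z + 1) = if iot n z = n - 1 then 1 else iot n z + 1 := by
  haveI := nz hn
  by_cases h0 : z = 0
  · subst h0
    rw [zero_add, iot_one hn, iot_zero, if_pos rfl]
  · rw [if_neg ((iot_eq_top_iff hn z).not.2 h0)]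
    have hval : iot n z = z.val := by rw [iot, if_neg h0]
    by_cases htop : z.val + 1 = n - 1
    · -- z + 1 = 0
      have hz1 : z + 1 = ((z.val + 1 : ℕ) : ZMod (n - 1)) := by
        rw [Nat.cast_add, Nat.cast_one, cast_val hn z]
      rw [hz1, htop, ZMod.natCast_self, iot_zero, hval, htop]
    · have hlt : z.val + 1 < n - 1 := by have := ZMod.val_lt z; omega
      have hz1 : z + 1 = ((z.val + 1 : ℕ) : ZMod (n - 1)) := by
        rw [Nat.cast_add, Nat.cast_one, cast_val hn z]
      rw [hz1, iot_of_val hn (by omega) hlt, hval]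

lemma step_a_iot (hn : 4 ≤ n) (z : ZMod (n - 1)) :
    stepAB n (iot n z) AB.a = iot n (z + 1) := by
  rw [iot_add_one hn]
  rfl

/-- the swap of 1 and 2 in `ZMod (n-1)` -/
def sigZ (n : ℕ) (z : ZMod (n - 1)) : ZMod (n - 1) :=
  if z = 1 then 2 else if z = 2 then 1 else z

lemma two_ne_one (hn : 4 ≤ n) : (2 : ZMod (n - 1)) ≠ 1 := fun h => by
  have := congrArg (iot n) h; rw [iot_two hn, iot_one hn] at this; omega

lemma one_ne_zero' (hn : 4 ≤ n) : (1 : ZMod (n - 1)) ≠ 0 := fun h => by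
  have := congrArg (iot n) h; rw [iot_one hn, iot_zero] at this; omega

lemma two_ne_zero' (hn : 4 ≤ n) : (2 : ZMod (n - 1)) ≠ 0 := fun h => by
  have := congrArg (iot n) h; rw [iot_two hn, iot_zero] at this; omega

lemma sigZ_invol (hn : 4 ≤ n) (z : ZMod (n - 1)) : sigZ n (sigZ n z) = z := by
  unfold sigZ
  split_ifs with h1 h2 h3 h4 h5 <;>
    first
      | rfl
      | (exact absurd h2 (two_ne_one hn)) | (exact h1.symm) | (exact h3.symm)
      | simp_all

lemma step_b_iot (hn : 4 ≤ n) (z : ZMod (n - 1)) :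
    stepAB n (iot n z) AB.b = iot n (sigZ n z) := by
  have hp := iot_pos hn z
  unfold sigZ
  by_cases h1 : z = 1
  · subst h1; rw [iot_one hn, if_pos rfl, iot_two hn]; rfl
  · by_cases h2 : z = 2
    · subst h2
      rw [iot_two hn, if_neg h1, if_pos rfl, iot_one hn]
      have : (2 : ZMod (n-1)) ≠ 1 := two_ne_one hn
      rfl
    · rw [if_neg h1, if_neg h2]
      have hne1 : iot n z ≠ 1 := fun h => h1 (by rw [← iot_one hn] at h; exact iot_inj hn h)
      have hne2 : iot n z ≠ 2 := fun h => h2 (by rw [← iot_two hn] at h; exact iot_inj hn h)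
      show (if iot n z = 0 then 2 else if iot n z = 1 then 2 else if iot n z = 2 then 1 else iot n z) = iot n z
      rw [if_neg (by omega), if_neg hne1, if_neg hne2]

def iotF (n : ℕ) (T : Finset (ZMod (n - 1))) : Finset ℕ := T.image (iot n)

def clN (n : ℕ) (S : Finset ℕ) : Finset ℕ := if n - 1 ∈ S then insert 0 S else S

lemma top_mem_iotF (hn : 4 ≤ n) (T : Finset (ZMod (n - 1))) :
    n - 1 ∈ iotF n T ↔ (0 : ZMod (n - 1)) ∈ T := by
  unfold iotF
  simp only [Finset.mem_image]
  constructor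
  · rintro ⟨z, hz, hiz⟩
    rwa [(iot_eq_top_iff hn z).1 hiz] at hz
  · intro h; exact ⟨0, h, iot_zero n⟩

def aZ (n : ℕ) (T : Finset (ZMod (n - 1))) : Finset (ZMod (n - 1)) := T.image (· + 1)

def bZ (n : ℕ) (T : Finset (ZMod (n - 1))) : Finset (ZMod (n - 1)) :=
  if (0 : ZMod (n - 1)) ∈ T then T.image (sigZ n) ∪ {2} else T.image (sigZ n)

lemma transfer_a (hn : 4 ≤ n) (T : Finset (ZMod (n - 1))) :
    stepSet n (clN n (iotF n T)) AB.a = clN n (iotF n (aZ n T)) := by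
  have himg : (clN n (iotF n T)).image (fun q => stepAB n q AB.a) = iotF n (aZ n T) := by
    have hbase : (iotF n T).image (fun q => stepAB n q AB.a) = iotF n (aZ n T) := by
      unfold iotF aZ
      rw [Finset.image_image, Finset.image_image]
      apply Finset.image_congr
      intro z _
      exact step_a_iot hn z
    unfold clN
    split_ifs with h
    · rw [Finset.image_insert, hbase]
      have h0 : (0:ZMod (n-1)) ∈ T := (top_mem_iotF hn T).1 h
      have : stepAB n 0 AB.a = 1 := by
        show (if 0 = n - 1 then 1 else 0 + 1) = 1
        rw [if_neg (by omega)]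
      rw [this]
      apply Finset.insert_eq_self.2
      unfold iotF aZ
      rw [Finset.mem_image]
      exact ⟨0 + 1, Finset.mem_image_of_mem _ h0, by rw [zero_add, iot_one hn]⟩
    · exact hbase
  unfold stepSet
  rw [himg]
  rfl

lemma transfer_b (hn : 4 ≤ n) (T : Finset (ZMod (n - 1))) :
    stepSet n (clN n (iotF n T)) AB.b = clN n (iotF n (bZ n T)) := by
  have himg : (clN n (iotF n T)).image (fun q => stepAB n q AB.b) = iotF n (bZ n T) := by
    have hbase : (iotF n T).image (fun q => stepAB n q AB.b) = iotF n (T.image (sigZ n)) := by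
      unfold iotF
      rw [Finset.image_image, Finset.image_image]
      apply Finset.image_congr
      intro z _
      exact step_b_iot hn z
    unfold clN
    split_ifs with h
    · have h0 : (0:ZMod (n-1)) ∈ T := (top_mem_iotF hn T).1 h
      rw [Finset.image_insert, hbase]
      have hs : stepAB n 0 AB.b = 2 := rfl
      rw [hs]
      unfold bZ
      rw [if_pos h0]
      unfold iotF
      rw [Finset.image_union]
      have : ({(2 : ZMod (n-1))} : Finset _).image (iot n) = {(2:ℕ)} := by
        rw [Finset.image_singleton, iot_two hn]
      rw [this, Finset.union_comm, ← Finset.insert_eq]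
    · have h0 : (0:ZMod (n-1)) ∉ T := fun hc => h ((top_mem_iotF hn T).2 hc)
      rw [hbase]
      unfold bZ
      rw [if_neg h0]
  unfold stepSet
  rw [himg]
  rfl

lemma zero_mem_bZ_iff (hn : 4 ≤ n) (T : Finset (ZMod (n - 1))) :
    (0 : ZMod (n - 1)) ∈ bZ n T ↔ (0 : ZMod (n - 1)) ∈ T := by
  have hsig : ∀ z : ZMod (n-1), sigZ n z = 0 ↔ z = 0 := by
    intro z
    unfold sigZ
    split_ifs with h1 h2
    · subst h1
      simp [two_ne_zero' hn, one_ne_zero' hn]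
    · subst h2
      simp [two_ne_zero' hn, one_ne_zero' hn]
    · rfl
  unfold bZ
  split_ifs with h
  · simp only [Finset.mem_union, Finset.mem_image, Finset.mem_singleton]
    constructor
    · intro _; exact h
    · intro _
      exact Or.inl ⟨0, h, (hsig 0).2 rfl⟩
  · simp only [Finset.mem_image]
    constructor
    · rintro ⟨z, hz, hz0⟩
      rwa [← (hsig z).1 hz0]
    · intro hc; exact absurd hc h

end ZModLayer

/-! ### Reachability -/

section Reach

variable {n : ℕ}

def ReachT (n : ℕ) (T : Finset (ZMod (n - 1))) : Prop :=
  ∃ w : List AB, w ≠ [] ∧ Sfun n w = clN n (iotF n T)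

lemma mem_image_sigZ (hn : 4 ≤ n) (T : Finset (ZMod (n - 1))) (x : ZMod (n - 1)) :
    x ∈ T.image (sigZ n) ↔ sigZ n x ∈ T := by
  rw [Finset.mem_image]
  constructor
  · rintro ⟨y, hy, rfl⟩; rwa [sigZ_invol hn]
  · intro h; exact ⟨_, h, sigZ_invol hn x⟩

lemma mem_image_rot (T : Finset (ZMod (n - 1))) (c x : ZMod (n - 1)) :
    x ∈ T.image (· + c) ↔ x - c ∈ T := by
  rw [Finset.mem_image]
  constructor
  · rintro ⟨y, hy, rfl⟩; simpa using hy
  · intro h; exact ⟨x - c, h, by ring⟩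

lemma reach_one (hn : 4 ≤ n) : ReachT n {1} := by
  refine ⟨[AB.a], by simp, ?_⟩
  have h1 : Sfun n [AB.a] = stepSet n {0} AB.a := rfl
  have h2 : stepAB n 0 AB.a = 1 := by
    show (if 0 = n - 1 then 1 else 0 + 1) = 1
    rw [if_neg (by omega)]
  rw [h1]
  unfold stepSet
  rw [Finset.image_singleton, h2, if_neg (by rw [Finset.mem_singleton]; omega)]
  unfold clN iotF
  rw [Finset.image_singleton, iot_one hn, if_neg (by rw [Finset.mem_singleton]; omega)]

lemma reach_a (hn : 4 ≤ n) {T : Finset (ZMod (n - 1))} (h : ReachT n T) : ReachT n (aZ n T) := by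
  obtain ⟨w, hne, hS⟩ := h
  exact ⟨w ++ [AB.a], by simp, by rw [Sfun_concat, hS, transfer_a hn]⟩

lemma reach_b (hn : 4 ≤ n) {T : Finset (ZMod (n - 1))} (h : ReachT n T) : ReachT n (bZ n T) := by
  obtain ⟨w, hne, hS⟩ := h
  exact ⟨w ++ [AB.b], by simp, by rw [Sfun_concat, hS, transfer_b hn]⟩

lemma reach_rot (hn : 4 ≤ n) {T : Finset (ZMod (n - 1))} (h : ReachT n T) (j : ℕ) :
    ReachT n (T.image (· + (j : ZMod (n - 1)))) := by
  induction j with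
  | zero =>
    have : T.image (· + ((0:ℕ) : ZMod (n - 1))) = T := by
      rw [Nat.cast_zero]
      rw [show ((· + (0 : ZMod (n-1)))) = id by funext x; simp]
      exact Finset.image_id
    rwa [this]
  | succ j ih =>
    have := reach_a hn ih
    unfold aZ at this
    rwa [Finset.image_image,
      show ((· + 1) ∘ (· + ((j:ℕ) : ZMod (n-1)))) = (· + (((j+1 : ℕ)) : ZMod (n-1))) by
        funext x; simp only [Function.comp_apply]; push_cast; ring] at this

lemma reach_rotz (hn : 4 ≤ n) {T : Finset (ZMod (n - 1))} (h : ReachT n T) (c : ZMod (n - 1)) :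
    ReachT n (T.image (· + c)) := by
  have := reach_rot hn h c.val
  rwa [cast_val hn] at this

lemma moveShift (hn : 4 ≤ n) {T : Finset (ZMod (n - 1))} {z : ZMod (n - 1)}
    (h : ReachT n T) (hz : z ∈ T) (hz1 : z + 1 ∉ T) (hzm : z - 1 ∉ T) :
    ReachT n (insert (z + 1) (T.erase z)) := by
  have h1 : (1 : ZMod (n-1)) ≠ 0 := one_ne_zero' hn
  have h2 : (2 : ZMod (n-1)) ≠ 0 := two_ne_zero' hn
  have h21 : (2 : ZMod (n-1)) ≠ 1 := two_ne_one hn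
  set c := 1 - z with hc
  have hT' : ReachT n (T.image (· + c)) := reach_rotz hn h c
  have h0T' : (0 : ZMod (n - 1)) ∉ T.image (· + c) := by
    rw [mem_image_rot]
    have : (0 : ZMod (n-1)) - c = z - 1 := by rw [hc]; ring
    rwa [this]
  have hb := reach_b hn hT'
  unfold bZ at hb
  rw [if_neg h0T'] at hb
  have hfinal := reach_rotz hn hb (z - 1)
  have : ((T.image (· + c)).image (sigZ n)).image (· + (z - 1)) = insert (z + 1) (T.erase z) := by
    ext y
    rw [mem_image_rot, mem_image_sigZ hn, mem_image_rot, Finset.mem_insert, Finset.mem_erase]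
    by_cases hy : y = z
    · rw [hy]
      have e1 : z - (z - 1) = 1 := by ring
      rw [e1]
      have e2 : sigZ n 1 = 2 := by unfold sigZ; rw [if_pos rfl]
      rw [e2]
      have e3 : (2 : ZMod (n-1)) - c = z + 1 := by rw [hc]; ring
      rw [e3]
      have hne : z ≠ z + 1 := by rw [Ne, left_eq_add]; exact h1
      simp [hz1, hne]
    · by_cases hy1 : y = z + 1
      · rw [hy1]
        have e1 : z + 1 - (z - 1) = 2 := by ring
        rw [e1]
        have e2 : sigZ n 2 = 1 := by unfold sigZ; rw [if_neg h21, if_pos rfl]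
        rw [e2]
        have e3 : (1 : ZMod (n-1)) - c = z := by rw [hc]; ring
        rw [e3]
        simp [hz]
      · have ew : y - (z - 1) ≠ 1 := by
          intro hh; apply hy; linear_combination hh
        have ew2 : y - (z - 1) ≠ 2 := by
          intro hh; apply hy1; linear_combination hh
        have e2 : sigZ n (y - (z - 1)) = y - (z - 1) := by
          unfold sigZ; rw [if_neg ew, if_neg ew2]
        rw [e2]
        have e3 : y - (z - 1) - c = y := by rw [hc]; ring
        rw [e3]
        constructor
        · intro hyT; exact Or.inr ⟨hy, hyT⟩
        · rintro (hcon | ⟨-, hyT⟩)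
          · exact absurd hcon hy1
          · exact hyT
  rwa [this] at hfinal

lemma reach_of_pair (hn : 4 ≤ n) {T : Finset (ZMod (n - 1))}
    (hIH : ∀ U : Finset (ZMod (n - 1)), U.Nonempty → U.card < T.card → ReachT n U)
    (hcard : 2 ≤ T.card) {x : ZMod (n - 1)} (hx : x ∈ T) (hx2 : x + 2 ∈ T) : ReachT n T := by
  have h1 : (1 : ZMod (n-1)) ≠ 0 := one_ne_zero' hn
  have h2 : (2 : ZMod (n-1)) ≠ 0 := two_ne_zero' hn
  have h21 : (2 : ZMod (n-1)) ≠ 1 := two_ne_one hn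
  set V := T.image (· + (-x)) with hV
  have hVcard : V.card = T.card := Finset.card_image_of_injective _ (add_left_injective _)
  have h0V : (0 : ZMod (n-1)) ∈ V := by
    rw [hV, mem_image_rot]
    simpa using hx
  have h2V : (2 : ZMod (n-1)) ∈ V := by
    rw [hV, mem_image_rot]
    have : (2 : ZMod (n-1)) - (-x) = x + 2 := by ring
    rwa [this]
  have hs1 : sigZ n 1 = 2 := by unfold sigZ; rw [if_pos rfl]
  have hs2 : sigZ n 2 = 1 := by unfold sigZ; rw [if_neg h21, if_pos rfl]
  have hsother : ∀ y : ZMod (n-1), y ≠ 1 → y ≠ 2 → sigZ n y = y := by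
    intro y hy1 hy2; unfold sigZ; rw [if_neg hy1, if_neg hy2]
  have key : ReachT n V := by
    by_cases h1V : (1 : ZMod (n-1)) ∈ V
    · -- erase 1
      set U := V.erase 1 with hU
      have h0U : (0 : ZMod (n-1)) ∈ U := Finset.mem_erase.2 ⟨fun hh => h1 hh.symm, h0V⟩
      have h2U : (2 : ZMod (n-1)) ∈ U := Finset.mem_erase.2 ⟨h21, h2V⟩
      have hUcard : U.card < T.card := by
        rw [hU, Finset.card_erase_of_mem h1V, hVcard]
        omega
      have hUreach := hIH U ⟨0, h0U⟩ hUcard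
      have hb := reach_b hn hUreach
      unfold bZ at hb
      rw [if_pos h0U] at hb
      have heq : U.image (sigZ n) ∪ {2} = V := by
        ext y
        rw [Finset.mem_union, Finset.mem_singleton, mem_image_sigZ hn]
        by_cases hy1 : y = 1
        · subst hy1
          rw [hs1]
          simp only [h1V, iff_true]
          exact Or.inl h2U
        · by_cases hy2 : y = 2
          · subst hy2
            simp only [h2V, iff_true]
            exact Or.inr trivial
          · rw [hsother y hy1 hy2]
            rw [hU, Finset.mem_erase]
            constructor
            · rintro (⟨-, hyV⟩ | hcon)
              · exact hyV
              · exact absurd hcon hy2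
            · intro hyV; exact Or.inl ⟨hy1, hyV⟩
      rwa [heq] at hb
    · -- erase 2
      set U := V.erase 2 with hU
      have h0U : (0 : ZMod (n-1)) ∈ U := Finset.mem_erase.2 ⟨fun hh => h2 hh.symm, h0V⟩
      have hUcard : U.card < T.card := by
        rw [hU, Finset.card_erase_of_mem h2V, hVcard]
        omega
      have hUreach := hIH U ⟨0, h0U⟩ hUcard
      have hb := reach_b hn hUreach
      unfold bZ at hb
      rw [if_pos h0U] at hb
      have heq : U.image (sigZ n) ∪ {2} = V := by
        ext y
        rw [Finset.mem_union, Finset.mem_singleton, mem_image_sigZ hn]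
        by_cases hy1 : y = 1
        · subst hy1
          rw [hs1]
          simp only [h1V, iff_false]
          rintro (hcon | hcon)
          · exact (Finset.mem_erase.1 hcon).1 rfl
          · exact h21 hcon.symm
        · by_cases hy2 : y = 2
          · subst hy2
            simp only [h2V, iff_true]
            exact Or.inr trivial
          · rw [hsother y hy1 hy2]
            rw [hU, Finset.mem_erase]
            constructor
            · rintro (⟨-, hyV⟩ | hcon)
              · exact hyV
              · exact absurd hcon hy2
            · intro hyV; exact Or.inl ⟨hy2, hyV⟩
      rwa [heq] at hb
  have : V.image (· + x) = T := by
    rw [hV, Finset.image_image]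
    rw [show ((· + x) ∘ (· + (-x))) = id by funext y; simp]
    exact Finset.image_id
  have := reach_rotz hn key x
  rwa [‹V.image (· + x) = T›] at this

end Reach

section ReachAll

variable {n : ℕ}

lemma add_one_ne (hn : 4 ≤ n) (u : ZMod (n - 1)) : u + 1 ≠ u := by
  intro hh
  exact one_ne_zero' hn (by rwa [add_comm, add_eq_right] at hh)

theorem reach_all (hn : 4 ≤ n) : ∀ T : Finset (ZMod (n - 1)), T.Nonempty → ReachT n T := by
  haveI := nz hn
  suffices H : ∀ k, ∀ T : Finset (ZMod (n - 1)), T.card = k → T.Nonempty → ReachT n T by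
    intro T hT; exact H T.card T rfl hT
  intro k
  induction k using Nat.strong_induction_on with
  | _ k ihk =>
    intro T hk hne
    rcases Nat.lt_or_ge k 2 with hk2 | hk2
    · -- k = 1
      have hk1 : T.card = 1 := by
        have := Finset.card_pos.2 hne
        omega
      obtain ⟨x, rfl⟩ := Finset.card_eq_one.1 hk1
      have h1 := reach_rotz hn (reach_one hn) (x - 1)
      rwa [Finset.image_singleton, show (1 : ZMod (n-1)) + (x - 1) = x by ring] at h1
    · -- k ≥ 2
      have hIH' : ∀ U : Finset (ZMod (n - 1)), U.Nonempty → U.card < T.card → ReachT n U := by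
        intro U hU hUc
        exact ihk U.card (by omega) U rfl hU
      -- inner induction on the gap g
      have inner : ∀ g, ∀ T' : Finset (ZMod (n - 1)), T'.card = k → 1 ≤ g → g < n - 1 →
          (∃ x : ZMod (n - 1), x ∈ T' ∧ x + (g : ℕ) ∈ T' ∧
            ∀ j : ℕ, 1 ≤ j → j < g → x + (j : ℕ) ∉ T') → ReachT n T' := by
        intro g
        induction g using Nat.strong_induction_on with
        | _ g ihg =>
          rintro T' hcard hg1 hgm ⟨x, hx, hxg, hint⟩
          have hIH'' : ∀ U : Finset (ZMod (n - 1)), U.Nonempty → U.card < T'.card → ReachT n U := by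
            intro U hU hUc
            exact ihk U.card (by omega) U rfl hU
          by_cases hP2 : ∃ y, y ∈ T' ∧ y + 2 ∈ T'
          · obtain ⟨y, hy, hy2⟩ := hP2
            exact reach_of_pair hn hIH'' (by omega) hy hy2
          · push_neg at hP2
            rcases Nat.lt_or_ge g 3 with hg3 | hg3
            · rcases Nat.lt_or_ge g 2 with hg2 | hg2
              · -- g = 1
                have hge : g = 1 := by omega
                subst hge
                rw [Nat.cast_one] at hxg
                have hxm1 : x - 1 ∉ T' := by
                  intro hcon
                  exact hP2 (x - 1) hcon (by rwa [show x - 1 + 2 = x + 1 by ring])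
                have hxm2 : x - 2 ∉ T' := by
                  intro hcon
                  exact hP2 (x - 2) hcon (by rwa [show x - 2 + 2 = x by ring])
                have hne10 : x - 1 ≠ x := by
                  intro hh
                  exact add_one_ne hn x (by linear_combination -hh)
                set T'' := insert (x - 1) (T'.erase x) with hT''
                have hx1nex : x + 1 ≠ x := add_one_ne hn x
                have hm1notE : x - 1 ∉ T'.erase x := fun hc => hxm1 (Finset.mem_erase.1 hc).2
                have hcard'' : T''.card = k := by
                  rw [hT'', Finset.card_insert_of_notMem hm1notE, Finset.card_erase_of_mem hx, hcard]
                  omega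
                have hmem'' : x - 1 ∈ T'' := Finset.mem_insert_self _ _
                have hx1mem'' : x + 1 ∈ T'' :=
                  Finset.mem_insert_of_mem (Finset.mem_erase.2 ⟨hx1nex, hxg⟩)
                have hIH3 : ∀ U : Finset (ZMod (n - 1)), U.Nonempty → U.card < T''.card → ReachT n U := by
                  intro U hU hUc
                  rw [hcard''] at hUc
                  exact ihk U.card (by omega) U rfl hU
                have hreach'' : ReachT n T'' := by
                  refine reach_of_pair hn hIH3 (by omega) hmem'' ?_
                  rwa [show x - 1 + 2 = x + 1 by ring]
                have hmv := moveShift hn hreach'' hmem'' ?_ ?_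
                · rw [show x - 1 + 1 = x by ring, hT'', Finset.erase_insert hm1notE,
                    Finset.insert_erase hx] at hmv
                  exact hmv
                · rw [show x - 1 + 1 = x by ring, hT'']
                  intro hc
                  rcases Finset.mem_insert.1 hc with hc | hc
                  · exact hne10 hc.symm
                  · exact (Finset.mem_erase.1 hc).1 rfl
                · rw [show x - 1 - 1 = x - 2 by ring, hT'']
                  intro hc
                  rcases Finset.mem_insert.1 hc with hc | hc
                  · exact add_one_ne hn (x - 2) (by linear_combination -hc)
                  · exact hxm2 (Finset.mem_erase.1 hc).2
              · -- g = 2 : contradiction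
                have hge : g = 2 := by omega
                subst hge
                refine absurd hxg ?_
                rw [Nat.cast_ofNat]
                exact hP2 x hx
            · -- g ≥ 3
              have hcastne : ∀ i j : ℕ, i < n - 1 → j < n - 1 → i ≠ j →
                  ((i : ℕ) : ZMod (n - 1)) ≠ ((j : ℕ) : ZMod (n - 1)) := by
                intro i j hi hj hij hc
                exact hij (cast_inj_lt hn hi hj hc)
              set G : ZMod (n - 1) := ((g : ℕ) : ZMod (n - 1)) with hG
              set G1 : ZMod (n - 1) := ((g - 1 : ℕ) : ZMod (n - 1)) with hG1
              set G2 : ZMod (n - 1) := ((g - 2 : ℕ) : ZMod (n - 1)) with hG2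
              have hG1G : G1 + 1 = G := by
                have h' : ((g : ℕ) : ZMod (n - 1)) = ((g - 1 : ℕ) : ZMod (n - 1)) + 1 := by
                  conv_lhs => rw [show (g : ℕ) = (g - 1) + 1 from by omega]
                  rw [Nat.cast_add, Nat.cast_one]
                rw [hG1, hG, h']
              have hG2G1 : G2 + 1 = G1 := by
                have h' : ((g - 1 : ℕ) : ZMod (n - 1)) = ((g - 2 : ℕ) : ZMod (n - 1)) + 1 := by
                  conv_lhs => rw [show (g - 1 : ℕ) = (g - 2) + 1 from by omega]
                  rw [Nat.cast_add, Nat.cast_one]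
                rw [hG2, hG1, h']
              have hG0 : G ≠ 0 := by
                rw [hG, show (0 : ZMod (n-1)) = ((0 : ℕ) : ZMod (n-1)) by rw [Nat.cast_zero]]
                exact hcastne g 0 hgm (by omega) (by omega)
              have hG10 : G1 ≠ 0 := by
                rw [hG1, show (0 : ZMod (n-1)) = ((0 : ℕ) : ZMod (n-1)) by rw [Nat.cast_zero]]
                exact hcastne (g-1) 0 (by omega) (by omega) (by omega)
              have hG1Gne : G1 ≠ G := hcastne (g-1) g (by omega) hgm (by omega)
              have hG2G1ne : G2 ≠ G1 := hcastne (g-2) (g-1) (by omega) (by omega) (by omega)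
              have hg1mem : x + G1 ∉ T' := hint (g-1) (by omega) (by omega)
              have hg2mem : x + G2 ∉ T' := hint (g-2) (by omega) (by omega)
              set T'' := insert (x + G1) (T'.erase (x + G)) with hT''
              have hG1notE : x + G1 ∉ T'.erase (x + G) := fun hc => hg1mem (Finset.mem_erase.1 hc).2
              have hcard'' : T''.card = k := by
                rw [hT'', Finset.card_insert_of_notMem hG1notE, Finset.card_erase_of_mem hxg, hcard]
                omega
              have hxmem'' : x ∈ T'' := by
                rw [hT'']
                refine Finset.mem_insert_of_mem (Finset.mem_erase.2 ⟨?_, hx⟩)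
                intro hc
                exact hG0 (by linear_combination -hc)
              have hG1mem'' : x + G1 ∈ T'' := Finset.mem_insert_self _ _
              have hreach'' : ReachT n T'' := by
                refine ihg (g-1) (by omega) T'' hcard'' (by omega) (by omega) ⟨x, hxmem'', hG1mem'', ?_⟩
                intro j hj1 hjg hc
                rw [hT''] at hc
                rcases Finset.mem_insert.1 hc with hc | hc
                · have : ((j : ℕ) : ZMod (n - 1)) = G1 := by linear_combination hc
                  rw [hG1] at this
                  exact absurd (cast_inj_lt hn (by omega) (by omega) this) (by omega)
                · exact hint j hj1 (by omega) (Finset.mem_erase.1 hc).2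
              have hmv := moveShift hn hreach'' hG1mem'' ?_ ?_
              · rw [show x + G1 + 1 = x + (G1 + 1) by ring, hG1G, hT'',
                  Finset.erase_insert hG1notE, Finset.insert_erase hxg] at hmv
                exact hmv
              · rw [show x + G1 + 1 = x + (G1 + 1) by ring, hG1G, hT'']
                intro hc
                rcases Finset.mem_insert.1 hc with hc | hc
                · exact hG1Gne (by linear_combination -hc)
                · exact (Finset.mem_erase.1 hc).1 rfl
              · rw [show x + G1 - 1 = x + (G2 + 1) - 1 by rw [hG2G1], show x + (G2 + 1) - 1 = x + G2 by ring, hT'']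
                intro hc
                rcases Finset.mem_insert.1 hc with hc | hc
                · exact hG2G1ne (by linear_combination hc)
                · exact hg2mem (Finset.mem_erase.1 hc).2
      -- kick off
      obtain ⟨x, hxT, y, hyT, hxy⟩ := Finset.one_lt_card.1 (by omega : 1 < T.card)
      classical
      have hyx : y - x ≠ 0 := sub_ne_zero.2 (Ne.symm hxy)
      have hd0 : 1 ≤ (y - x).val ∧ x + (((y - x).val : ℕ) : ZMod (n - 1)) ∈ T := by
        constructor
        · have := (ZMod.val_eq_zero (y - x)).not.2 hyx
          omega
        · rw [cast_val hn, show x + (y - x) = y by ring]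
          exact hyT
      have hex : ∃ j : ℕ, 1 ≤ j ∧ x + ((j : ℕ) : ZMod (n - 1)) ∈ T := ⟨(y - x).val, hd0⟩
      set g := Nat.find hex with hg
      have hspec := Nat.find_spec hex
      have hglt : g < n - 1 := by
        have hle : g ≤ (y - x).val := Nat.find_min' hex hd0
        have := ZMod.val_lt (y - x)
        omega
      refine inner g T hk hspec.1 hglt ⟨x, hxT, hspec.2, ?_⟩
      intro j hj1 hjg hcon
      exact Nat.find_min hex hjg ⟨hj1, hcon⟩

end ReachAll

/-! ### Distinguishing words and counting -/

section Count

variable {n : ℕ}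

lemma run_iot_replicate (hn : 4 ≤ n) (j : ℕ) : ∀ z : ZMod (n - 1),
    run n (iot n z) (List.replicate j AB.a) = iot n (z + (j : ℕ)) := by
  induction j with
  | zero => intro z; simp [run]
  | succ j ih =>
    intro z
    rw [List.replicate_succ, run_cons, step_a_iot hn, ih (z + 1)]
    congr 1
    push_cast
    ring

lemma run_zero_replicate (hn : 4 ≤ n) (j : ℕ) (hj : 1 ≤ j) :
    run n 0 (List.replicate j AB.a) = iot n ((j : ℕ) : ZMod (n - 1)) := by
  obtain ⟨j', rfl⟩ : ∃ j', j = j' + 1 := ⟨j - 1, by omega⟩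
  rw [show j' + 1 = 1 + j' by omega, List.replicate_add, List.replicate_one, run_append]
  have h0a : run n 0 [AB.a] = iot n 1 := by
    rw [iot_one hn]
    show stepAB n 0 AB.a = 1
    show (if 0 = n - 1 then 1 else 0 + 1) = 1
    rw [if_neg (by omega)]
  rw [h0a, run_iot_replicate hn j' 1]
  congr 1
  push_cast
  ring

lemma split_replicate {j : ℕ} {v s : List AB} (h : List.replicate j AB.a = v ++ s) :
    v = List.replicate v.length AB.a ∧ s = List.replicate s.length AB.a ∧ v.length + s.length = j := by
  have hmem : ∀ c ∈ v ++ s, c = AB.a := by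
    intro c hc
    rw [← h] at hc
    exact List.eq_of_mem_replicate hc
  refine ⟨List.eq_replicate_of_mem fun c hc => hmem c (List.mem_append_left _ hc),
    List.eq_replicate_of_mem fun c hc => hmem c (List.mem_append_right _ hc), ?_⟩
  have := congrArg List.length h
  simpa using this.symm

lemma rep_mem_L (hn : 4 ≤ n) (j : ℕ) :
    List.replicate j AB.a ∈ LnAB n ↔ (1 ≤ j ∧ ((j : ℕ) : ZMod (n - 1)) = 0) := by
  rw [mem_Ln]
  rcases Nat.eq_zero_or_pos j with rfl | hj
  · simp only [List.replicate_zero]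
    show run n 0 [] = n - 1 ↔ _
    simp only [run, List.foldl_nil]
    constructor
    · intro h; omega
    · intro h; omega
  · rw [run_zero_replicate hn j hj, iot_eq_top_iff hn]
    constructor
    · intro h; exact ⟨hj, h⟩
    · intro h; exact h.2

lemma rep_mem_Lstar (hn : 4 ≤ n) (j : ℕ) :
    List.replicate j AB.a ∈ KStar.kstar (LnAB n) ↔ ((j : ℕ) : ZMod (n - 1)) = 0 := by
  haveI := nz hn
  constructor
  · induction j using Nat.strong_induction_on with
    | _ j ihj =>
      intro hj
      rcases (mem_kstar_iff n _).1 hj with h | ⟨v, s, hv, hs, hvs⟩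
      · have : j = 0 := by simpa using congrArg List.length h
        rw [this, Nat.cast_zero]
      · obtain ⟨hva, hsa, hlen⟩ := split_replicate hvs.symm
        rw [hva] at hv
        rw [rep_mem_L hn] at hv
        have hslen : s.length < j ∨ j = 0 := by omega
        rcases hslen with hlt | rfl
        · rw [hsa] at hs
          have := ihj s.length hlt hs
          rw [show (j : ℕ) = v.length + s.length by omega, Nat.cast_add, hv.2, this, add_zero]
        · rw [Nat.cast_zero]
  · intro hj
    have hdvd : (n - 1) ∣ j := (ZMod.natCast_eq_zero_iff j (n - 1)).1 hj
    obtain ⟨t, rfl⟩ := hdvd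
    clear hj
    induction t with
    | zero => simpa using Language.nil_mem_kstar _
    | succ t iht =>
      rw [show (n - 1) * (t + 1) = (n - 1) + (n - 1) * t by ring, List.replicate_add]
      refine (mem_kstar_iff n _).2 (Or.inr ⟨_, _, ?_, iht, rfl⟩)
      rw [rep_mem_L hn]
      exact ⟨by omega, by rw [ZMod.natCast_self]⟩

lemma mem_clN (n : ℕ) (S : Finset ℕ) (p : ℕ) :
    p ∈ clN n S ↔ p ∈ S ∨ (p = 0 ∧ n - 1 ∈ S) := by
  unfold clN
  split_ifs with h
  · rw [Finset.mem_insert]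
    constructor
    · rintro (rfl | hp)
      · exact Or.inr ⟨rfl, h⟩
      · exact Or.inl hp
    · rintro (hp | ⟨rfl, -⟩)
      · exact Or.inr hp
      · exact Or.inl rfl
  · constructor
    · exact Or.inl
    · rintro (hp | ⟨-, hc⟩)
      · exact hp
      · exact absurd hc h

lemma zero_notin_iotF (hn : 4 ≤ n) (T : Finset (ZMod (n - 1))) : (0 : ℕ) ∉ iotF n T := by
  intro hc
  obtain ⟨z, -, hz⟩ := Finset.mem_image.1 hc
  have := iot_pos hn z
  omega

lemma rep_mem_Cset (hn : 4 ≤ n) (T : Finset (ZMod (n - 1))) (q : ZMod (n - 1)) :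
    List.replicate ((n - 1) - iot n q) AB.a ∈ Cset n (clN n (iotF n T)) ↔ q ∈ T := by
  haveI := nz hn
  set j := (n - 1) - iot n q with hj
  have hiot1 := iot_pos hn q
  have hiot2 := iot_le hn q
  have hjlt : j < n - 1 := by omega
  have hqj : q + ((j : ℕ) : ZMod (n - 1)) = 0 := by
    rw [← iot_cast hn q, ← Nat.cast_add, show iot n q + j = n - 1 by omega, ZMod.natCast_self]
  constructor
  · intro hmem
    rcases hmem with ⟨hnil, h0⟩ | ⟨q', hq', v, s, heq, hrun, hs⟩
    · -- j = 0, q = 0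
      have hj0 : j = 0 := by simpa using congrArg List.length hnil
      have hq0 : q = 0 := by rwa [hj0, Nat.cast_zero, add_zero] at hqj
      rcases (mem_clN n _ 0).1 h0 with hc | ⟨-, hc⟩
      · exact absurd hc (zero_notin_iotF hn T)
      · rw [hq0]; exact (top_mem_iotF hn T).1 hc
    · obtain ⟨hva, hsa, hlen⟩ := split_replicate heq
      have hsl : s.length = 0 := by
        rw [hsa, rep_mem_Lstar hn] at hs
        by_contra hne
        have : s.length = 0 := by
          have := cast_inj_lt hn (show s.length < n - 1 by omega) (show 0 < n - 1 by omega)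
            (by rw [hs, Nat.cast_zero])
          exact this
        exact hne this
      have hveq : v = List.replicate j AB.a := by
        rw [hva]; congr 1; omega
      rw [hveq] at hrun
      rcases (mem_clN n _ q').1 hq' with hc | ⟨rfl, -⟩
      · obtain ⟨z, hz, rfl⟩ := Finset.mem_image.1 hc
        rw [run_iot_replicate hn j z, iot_eq_top_iff hn] at hrun
        have : z = q := by linear_combination hrun - hqj
        rwa [← this]
      · -- q' = 0
        exfalso
        rcases Nat.eq_zero_or_pos j with hj0 | hjpos
        · rw [hj0] at hrun
          simp only [List.replicate_zero, run, List.foldl_nil] at hrun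
          omega
        · rw [run_zero_replicate hn j hjpos, iot_eq_top_iff hn] at hrun
          have := cast_inj_lt hn hjlt (show 0 < n - 1 by omega) (by rw [hrun, Nat.cast_zero])
          omega
  · intro hq
    refine Or.inr ⟨iot n q, (mem_clN n _ _).2 (Or.inl (Finset.mem_image_of_mem _ hq)),
      List.replicate j AB.a, [], (List.append_nil _).symm, ?_, Language.nil_mem_kstar _⟩
    rw [run_iot_replicate hn j q, hqj, iot_zero]

lemma b_mem_Cset_zero (hn : 4 ≤ n) :
    [AB.b] ∈ Cset n (clN n (iotF n ({0} : Finset (ZMod (n - 1))))) := by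
  refine Or.inr ⟨n - 1, ?_, [AB.b], [], rfl, ?_, Language.nil_mem_kstar _⟩
  · refine (mem_clN n _ _).2 (Or.inl ?_)
    rw [iotF, Finset.image_singleton, iot_zero, Finset.mem_singleton]
  · show stepAB n (n - 1) AB.b = n - 1
    show (if n - 1 = 0 then 2 else if n - 1 = 1 then 2 else if n - 1 = 2 then 1 else n - 1) = n - 1
    rw [if_neg (by omega), if_neg (by omega), if_neg (by omega)]

lemma b_not_Lstar (hn : 4 ≤ n) : [AB.b] ∉ KStar.kstar (LnAB n) := by
  intro h
  rcases (mem_kstar_iff n _).1 h with h | ⟨v, s, hv, hs, hvs⟩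
  · simp at h
  · cases v with
    | nil =>
      rw [mem_Ln] at hv
      simp only [run, List.foldl_nil] at hv
      omega
    | cons c v' =>
      simp only [List.cons_append, List.cons.injEq] at hvs
      obtain ⟨rfl, hv's⟩ := hvs
      have hv' : v' = [] := by
        cases v' with
        | nil => rfl
        | cons _ _ => simp at hv's
      subst hv'
      rw [mem_Ln] at hv
      have : run n 0 [AB.b] = 2 := rfl
      omega

open Classical in
noncomputable def Psi (n : ℕ) (T : Finset (ZMod (n - 1))) : Language AB :=
  Cset n (if T = ∅ then {0} else clN n (iotF n T))

lemma psi_empty (n : ℕ) : Psi n ∅ = Cset n {0} := by rw [Psi, if_pos rfl]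

lemma psi_nonempty {n : ℕ} {T : Finset (ZMod (n - 1))} (h : T ≠ ∅) :
    Psi n T = Cset n (clN n (iotF n T)) := by rw [Psi, if_neg h]

lemma psi_ne_empty (hn : 4 ≤ n) (T : Finset (ZMod (n - 1))) (hT : T ≠ ∅) :
    Psi n T ≠ Psi n ∅ := by
  intro h
  rw [psi_empty, Cset_zero n hn, psi_nonempty hT] at h
  by_cases h0 : T = ({0} : Finset (ZMod (n - 1)))
  · subst h0
    have hb := b_mem_Cset_zero hn
    rw [h] at hb
    exact b_not_Lstar hn hb
  · have hq : ∃ q ∈ T, q ≠ 0 := by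
      by_contra hc
      push_neg at hc
      have hsub : T ⊆ {0} := fun q hqT => Finset.mem_singleton.2 (hc q hqT)
      rcases Finset.subset_singleton_iff.1 hsub with hc' | hc'
      · exact hT hc'
      · exact h0 hc'
    obtain ⟨q, hqT, hq0⟩ := hq
    have hmem := (rep_mem_Cset hn T q).2 hqT
    rw [h, rep_mem_Lstar hn] at hmem
    have hlt := iot_lt_of_ne hn hq0
    have hpos := iot_pos hn q
    have := cast_inj_lt hn (show (n-1) - iot n q < n - 1 by omega) (show 0 < n - 1 by omega)
      (by rw [hmem, Nat.cast_zero])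
    omega

lemma psi_inj (hn : 4 ≤ n) : Function.Injective (Psi n) := by
  intro T T' h
  rcases eq_or_ne T ∅ with rfl | hT
  · rcases eq_or_ne T' ∅ with rfl | hT'
    · rfl
    · exact absurd h.symm (psi_ne_empty hn T' hT')
  · rcases eq_or_ne T' ∅ with rfl | hT'
    · exact absurd h (psi_ne_empty hn T hT)
    · apply Finset.ext
      intro q
      rw [← rep_mem_Cset hn T q, ← rep_mem_Cset hn T' q, ← psi_nonempty hT, ← psi_nonempty hT', h]

lemma stepSet_zero_form (hn : 4 ≤ n) (c : AB) :
    ∃ T : Finset (ZMod (n - 1)), T.Nonempty ∧ stepSet n {0} c = clN n (iotF n T) := by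
  cases c with
  | a =>
    refine ⟨{1}, Finset.singleton_nonempty _, ?_⟩
    unfold stepSet
    rw [Finset.image_singleton]
    have h2 : stepAB n 0 AB.a = 1 := by
      show (if 0 = n - 1 then 1 else 0 + 1) = 1
      rw [if_neg (by omega)]
    rw [h2, if_neg (by rw [Finset.mem_singleton]; omega)]
    unfold clN iotF
    rw [Finset.image_singleton, iot_one hn, if_neg (by rw [Finset.mem_singleton]; omega)]
  | b =>
    refine ⟨{2}, Finset.singleton_nonempty _, ?_⟩
    unfold stepSet
    rw [Finset.image_singleton]
    have h2 : stepAB n 0 AB.b = 2 := rfl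
    rw [h2, if_neg (by rw [Finset.mem_singleton]; omega)]
    unfold clN iotF
    rw [Finset.image_singleton, iot_two hn, if_neg (by rw [Finset.mem_singleton]; omega)]

lemma Sfun_form (hn : 4 ≤ n) (w : List AB) :
    Sfun n w = {0} ∨ ∃ T : Finset (ZMod (n - 1)), T.Nonempty ∧ Sfun n w = clN n (iotF n T) := by
  induction w using List.reverseRecOn with
  | nil => exact Or.inl (Sfun_nil n)
  | append_singleton w c ih =>
    rw [Sfun_concat]
    rcases ih with h | ⟨T, hTne, h⟩
    · rw [h]
      exact Or.inr (stepSet_zero_form hn c)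
    · rw [h]
      cases c with
      | a =>
        refine Or.inr ⟨aZ n T, ?_, transfer_a hn T⟩
        exact hTne.image _
      | b =>
        refine Or.inr ⟨bZ n T, ?_, transfer_b hn T⟩
        unfold bZ
        split_ifs with h0
        · exact ⟨2, Finset.mem_union_right _ (Finset.mem_singleton_self _)⟩
        · exact hTne.image _

lemma quotients_eq (hn : 4 ≤ n) :
    quotients (KStar.kstar (LnAB n) : Language AB) = Set.range (Psi n) := by
  apply Set.eq_of_subset_of_subset
  · rintro L ⟨w, rfl⟩
    rw [quot_eq hn w]
    rcases Sfun_form hn w with h | ⟨T, hTne, h⟩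
    · exact ⟨∅, by rw [psi_empty, h]⟩
    · exact ⟨T, by rw [psi_nonempty (Finset.nonempty_iff_ne_empty.1 hTne), h]⟩
  · rintro L ⟨T, rfl⟩
    rcases eq_or_ne T ∅ with rfl | hT
    · refine ⟨[], ?_⟩
      rw [quot_eq hn [], Sfun_nil, psi_empty]
    · obtain ⟨w, -, hS⟩ := reach_all hn T (Finset.nonempty_iff_ne_empty.2 hT)
      refine ⟨w, ?_⟩
      rw [quot_eq hn w, hS, psi_nonempty hT]

end Count

end SC12

open SC12 in
/-- The Kleene star `(L_n(a,b))^*` has state complexity exactly `2^{n-1}`. -/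
theorem stmt12 (n : ℕ) (hn : 4 ≤ n) :
    stateComplexity (KStar.kstar (LnAB n) : Language AB) = 2 ^ (n - 1) := by
  haveI : NeZero (n - 1) := ⟨by omega⟩
  unfold stateComplexity
  rw [quotients_eq hn]
  refine (Nat.card_range_of_injective (psi_inj hn)).trans ?_
  rw [Nat.card_eq_fintype_card, Fintype.card_finset, ZMod.card]
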